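/- arXiv:1708.04850 — 2 statements merged into one kernel-verified Lean document; each statement's English description precedes it below -/
import Mathlib

section
/- Let 𝐤∈ℕ[Φ]^W and w∈W. Then for all λ,μ∈P: (λ→_{sym,𝐤}μ or μ→_{sym,𝐤}λ) if and only if (w(λ)→_{sym,𝐤}w(μ) or w(μ)→_{sym,𝐤}w(λ)). That is, every Weyl group element is an automorphism of the undirected graph of symmetric interval-firing. -/
open RealInnerProductSpace Pointwise

noncomputable section

variable {V : Type*} [NormedAddCommGroup V] [InnerProductSpace ℝ V]

/-- The coroot `α∨ = 2α/⟨α,α⟩` associated to a vector `α`. -/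
def coroot (α : V) : V := (2 / ⟪α, α⟫) • α

/-- The reflection `s_α(v) = v − ⟨v,α∨⟩α` across the hyperplane orthogonal to `α`. -/
def sRefl (α : V) (v : V) : V := v - ⟪v, coroot α⟫ • α

/-- An irreducible reduced crystallographic root system in the real inner product
space `V`, together with a chosen set of positive roots and simple roots. -/
structure RootSystemData (V : Type*) [NormedAddCommGroup V] [InnerProductSpace ℝ V] where
  n : ℕ
  roots : Set V
  roots_finite : roots.Finite
  roots_nonzero : (0 : V) ∉ roots
  roots_span : Submodule.span ℝ roots = ⊤
  refl_mem : ∀ α ∈ roots, ∀ β ∈ roots, sRefl α β ∈ roots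
  reduced : ∀ α ∈ roots, ∀ c : ℝ, c • α ∈ roots → c • α = α ∨ c • α = -α
  crystallographic : ∀ α ∈ roots, ∀ β ∈ roots, ∃ m : ℤ, ⟪β, coroot α⟫ = (m : ℝ)
  pos : Set V
  pos_subset : pos ⊆ roots
  pos_union : roots = pos ∪ (-pos)
  simple : Fin n → V
  simple_mem : ∀ i, simple i ∈ pos
  simple_li : LinearIndependent ℝ simple
  simple_span : Submodule.span ℝ (Set.range simple) = ⊤
  pos_combo : ∀ α ∈ pos, ∃ c : Fin n → ℕ, α = ∑ i, (c i : ℝ) • simple i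
  irred : ∀ S₁ S₂ : Set V, roots = S₁ ∪ S₂ →
    (∀ α ∈ S₁, ∀ β ∈ S₂, ⟪α, β⟫ = 0) → S₁ = ∅ ∨ S₂ = ∅

namespace RootSystemData

variable (R : RootSystemData V)

/-- The Weyl group `W`: all finite compositions of reflections in roots. -/
def weyl : Set (V → V) :=
  {w | ∃ l : List V, (∀ α ∈ l, α ∈ R.roots) ∧ w = (l.map sRefl).foldr (· ∘ ·) id}

/-- The orbit `W(v)` of a vector under the Weyl group. -/
def orbit (v : V) : Set V := {u | ∃ w ∈ R.weyl, u = w v}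

/-- The weight lattice `P`. -/
def weightLattice : Set V :=
  {v | ∀ α ∈ R.roots, ∃ m : ℤ, ⟪v, coroot α⟫ = (m : ℝ)}

/-- The permutohedron `Π(v) = ConvexHull W(v)`. -/
def perm (v : V) : Set V := convexHull ℝ (R.orbit v)

/-- The discrete permutohedron `Π^Q(λ) = Π(λ) ∩ (Q+λ)`. -/
def permQ (lam : V) : Set V :=
  R.perm lam ∩ {v | v - lam ∈ Submodule.span ℤ R.roots}

/-- Dominance: nonnegative pairing with all simple coroots. -/
def IsDominant (v : V) : Prop := ∀ i, 0 ≤ ⟪v, coroot (R.simple i)⟫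

/-- `W`-invariance of a function `𝐤 : Φ → ℕ`. -/
def IsWInvariant (k : V → ℕ) : Prop := ∀ w ∈ R.weyl, ∀ α ∈ R.roots, k (w α) = k α

/-- Symmetric interval-firing: `λ → λ+α` for `α ∈ Φ⁺` whenever
`⟨λ,α∨⟩+1 ∈ {−𝐤(α),…,𝐤(α)}`. -/
def symFire (k : V → ℕ) (lam mu : V) : Prop :=
  lam ∈ R.weightLattice ∧ ∃ α ∈ R.pos, mu = lam + α ∧
    -(k α : ℝ) ≤ ⟪lam, coroot α⟫ + 1 ∧ ⟪lam, coroot α⟫ + 1 ≤ (k α : ℝ)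

/-- Truncated interval-firing: `λ → λ+α` for `α ∈ Φ⁺` whenever
`⟨λ,α∨⟩+1 ∈ {−𝐤(α)+1,…,𝐤(α)}`. -/
def trFire (k : V → ℕ) (lam mu : V) : Prop :=
  lam ∈ R.weightLattice ∧ ∃ α ∈ R.pos, mu = lam + α ∧
    -(k α : ℝ) + 1 ≤ ⟪lam, coroot α⟫ + 1 ∧ ⟪lam, coroot α⟫ + 1 ≤ (k α : ℝ)

/-- All roots have the same length. -/
def SimplyLaced : Prop := ∀ α ∈ R.roots, ∀ β ∈ R.roots, ‖α‖ = ‖β‖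

/-- A root of maximal length. -/
def IsLongRoot (α : V) : Prop := α ∈ R.roots ∧ ∀ β ∈ R.roots, ‖β‖ ≤ ‖α‖

/-- A root which is not of maximal length. -/
def IsShortRoot (α : V) : Prop := α ∈ R.roots ∧ ¬ R.IsLongRoot α

/-- `𝐤` is good: either `Φ` is simply laced, or `𝐤` vanishing on short roots
implies `𝐤` vanishing on all (in particular long) roots. -/
def IsGood (k : V → ℕ) : Prop :=
  R.SimplyLaced ∨ ((∀ α, R.IsShortRoot α → k α = 0) → ∀ β ∈ R.roots, k β = 0)

/-- The product of the simple reflections indexed by a word. -/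
def wordProd (l : List (Fin R.n)) : V → V :=
  (l.map (fun i => sRefl (R.simple i))).foldr (· ∘ ·) id

/-- Coxeter length: the minimal length of a word in the simple reflections
expressing `w`. -/
def coxLen (w : V → V) : ℕ :=
  sInf {m : ℕ | ∃ l : List (Fin R.n), l.length = m ∧ w = R.wordProd l}

/-- The parabolic subgroup `W_I`: all compositions of simple reflections `s_{αᵢ}`, `i ∈ I`. -/
def weylI (I : Set (Fin R.n)) : Set (V → V) :=
  {w | ∃ l : List (Fin R.n), (∀ i ∈ l, i ∈ I) ∧ w = R.wordProd l}

/-- The orbit `W_I(v)`. -/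
def orbitI (I : Set (Fin R.n)) (v : V) : Set V := {u | ∃ w ∈ R.weylI I, u = w v}

/-- The discrete parabolic permutohedron `Π^Q_I(λ)`. -/
def permQI (I : Set (Fin R.n)) (lam : V) : Set V :=
  convexHull ℝ (R.orbitI I lam) ∩ {v | v - lam ∈ Submodule.span ℤ R.roots}

/-- Given a choice `dm` of dominant representatives, `I^{0,1}_λ` is the set of
indices `i` with `⟨λ_dom, αᵢ∨⟩ ∈ {0,1}`. -/
def I01 (dm : V → V) (lam : V) : Set (Fin R.n) :=
  {i | ⟪dm lam, coroot (R.simple i)⟫ = 0 ∨ ⟪dm lam, coroot (R.simple i)⟫ = 1}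

/-- The minimal length of an `α`-traverse in `Π^Q(λ)`. -/
def traverseLen (lam α : V) : ℕ :=
  sInf {ℓ : ℕ | ∃ mu : V, (∀ i : ℕ, i ≤ ℓ → mu - (i : ℝ) • α ∈ R.permQ lam) ∧
    mu + α ∉ R.permQ lam ∧ mu - ((ℓ : ℝ) + 1) • α ∉ R.permQ lam}

/-- `m_λ(α) = min {cᵢ : αᵢ ∈ W(α)}` where `λ = Σ cᵢ ωᵢ` is dominant,
i.e. `cᵢ = ⟨λ, αᵢ∨⟩`. -/
def mVal (lam α : V) : ℕ :=
  sInf {c : ℕ | ∃ i, R.simple i ∈ R.orbit α ∧ (c : ℝ) = ⟪lam, coroot (R.simple i)⟫}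

/-- Funny weights (only exist when `Φ` is not simply laced). -/
def IsFunny (lam : V) : Prop :=
  ¬ R.SimplyLaced ∧ ∃ l s : Fin R.n, R.IsLongRoot (R.simple l) ∧ R.IsShortRoot (R.simple s) ∧
    ⟪R.simple l, coroot (R.simple s)⟫ ≠ 0 ∧
    ⟪lam, coroot (R.simple s)⟫ = 0 ∧ 1 ≤ ⟪lam, coroot (R.simple l)⟫ ∧
    ∀ i, R.IsLongRoot (R.simple i) → ⟪lam, coroot (R.simple l)⟫ ≤ ⟪lam, coroot (R.simple i)⟫

end RootSystemData

/-- The map `η_𝐤(λ) = λ + w_λ(ρ_𝐤)`, relative to a choice `fw` of fundamental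
weights and a choice `wl` of minimal-length Weyl elements `λ ↦ w_λ`. -/
def etaMap (R : RootSystemData V) (fw : Fin R.n → V) (wl : V → V → V)
    (k : V → ℕ) (lam : V) : V :=
  lam + wl lam (∑ i, (k (R.simple i) : ℝ) • fw i)

/-- Two points are in the same connected component of a relation if they are
related by its reflexive-transitive-symmetric closure. -/
def SameComponent (r : V → V → Prop) (x y : V) : Prop :=
  Relation.ReflTransGen (fun a b => r a b ∨ r b a) x y


section Aux

lemma aux_inner_self_ne {α : V} (hα : α ≠ 0) : ⟪α, α⟫ ≠ 0 :=
  inner_self_ne_zero.mpr hα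

lemma aux_inner_coroot_self {α : V} (hα : α ≠ 0) : ⟪α, coroot α⟫ = 2 := by
  rw [coroot, real_inner_smul_right]
  field_simp [aux_inner_self_ne hα]

lemma aux_sRefl_add (α u v : V) : sRefl α (u + v) = sRefl α u + sRefl α v := by
  simp only [sRefl, inner_add_left, add_smul]; abel

lemma aux_sRefl_smul (α : V) (c : ℝ) (v : V) : sRefl α (c • v) = c • sRefl α v := by
  simp only [sRefl, real_inner_smul_left, smul_sub, mul_smul]

lemma aux_inner_sRefl {α : V} (hα : α ≠ 0) (u v : V) :
    ⟪sRefl α u, sRefl α v⟫ = ⟪u, v⟫ := by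
  have h := aux_inner_self_ne hα
  simp only [sRefl, coroot, real_inner_smul_right, inner_sub_left, inner_sub_right,
    real_inner_smul_left]
  have huv : ⟪α, (v : V)⟫ = ⟪v, α⟫ := real_inner_comm v α
  field_simp
  rw [huv]
  ring

lemma aux_sRefl_sRefl {α : V} (hα : α ≠ 0) (v : V) : sRefl α (sRefl α v) = v := by
  have h2 : ⟪(α : V), coroot α⟫ = 2 := aux_inner_coroot_self hα
  simp only [sRefl, inner_sub_left, real_inner_smul_left, h2, sub_smul, mul_comm]
  module

lemma aux_coroot_sRefl {α : V} (hα : α ≠ 0) (β : V) :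
    coroot (sRefl α β) = sRefl α (coroot β) := by
  rw [coroot, coroot, aux_inner_sRefl hα, aux_sRefl_smul]

lemma aux_coroot_neg (β : V) : coroot (-β) = -coroot β := by
  simp [coroot, inner_neg_neg]

lemma aux_inner_sRefl_coroot {α : V} (hα : α ≠ 0) (u β : V) :
    ⟪sRefl α u, coroot (sRefl α β)⟫ = ⟪u, coroot β⟫ := by
  rw [aux_coroot_sRefl hα, aux_inner_sRefl hα]

namespace RootSystemData

variable (R : RootSystemData V)

lemma aux_root_ne {γ : V} (hγ : γ ∈ R.roots) : γ ≠ 0 := fun h => R.roots_nonzero (h ▸ hγ)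

lemma aux_sRefl_mem_weyl {γ : V} (hγ : γ ∈ R.roots) : sRefl γ ∈ R.weyl :=
  ⟨[γ], by simpa using hγ, rfl⟩

lemma aux_wl_sRefl {γ : V} (hγ : γ ∈ R.roots) {lam : V}
    (hlam : lam ∈ R.weightLattice) : sRefl γ lam ∈ R.weightLattice := by
  intro α hα
  have hγ0 := R.aux_root_ne hγ
  have hsα : sRefl γ α ∈ R.roots := R.refl_mem γ hγ α hα
  obtain ⟨m, hm⟩ := hlam _ hsα
  refine ⟨m, ?_⟩
  have : ⟪sRefl γ lam, coroot (sRefl γ (sRefl γ α))⟫ = ⟪lam, coroot (sRefl γ α)⟫ :=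
    aux_inner_sRefl_coroot hγ0 lam (sRefl γ α)
  rw [aux_sRefl_sRefl hγ0] at this
  exact this.trans hm

lemma aux_sRefl_self {γ : V} (hγ : γ ≠ 0) : sRefl γ γ = -γ := by
  rw [sRefl, aux_inner_coroot_self hγ, two_smul]; abel

lemma aux_k_neg {k : V → ℕ} (hk : R.IsWInvariant k) {α : V} (hα : α ∈ R.roots) :
    k (-α) = k α := by
  have := hk (sRefl α) (R.aux_sRefl_mem_weyl hα) α hα
  rwa [aux_sRefl_self (R.aux_root_ne hα)] at this

/-- Single-reflection step: a firing move maps to an (un)directed firing move. -/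
lemma aux_symFire_sRefl {k : V → ℕ} (hk : R.IsWInvariant k) {γ : V} (hγ : γ ∈ R.roots)
    {lam mu : V} (hmu : mu ∈ R.weightLattice) (h : R.symFire k lam mu) :
    R.symFire k (sRefl γ lam) (sRefl γ mu) ∨ R.symFire k (sRefl γ mu) (sRefl γ lam) := by
  obtain ⟨hlamP, α, hαpos, hmueq, h1, h2⟩ := h
  have hγ0 := R.aux_root_ne hγ
  have hαroot : α ∈ R.roots := R.pos_subset hαpos
  have hα0 : α ≠ 0 := R.aux_root_ne hαroot
  have hβroot : sRefl γ α ∈ R.roots := R.refl_mem γ hγ α hαroot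
  have hkβ : k (sRefl γ α) = k α := hk (sRefl γ) (R.aux_sRefl_mem_weyl hγ) α hαroot
  have hsum : sRefl γ mu = sRefl γ lam + sRefl γ α := by rw [hmueq, aux_sRefl_add]
  have hinner : ⟪sRefl γ lam, coroot (sRefl γ α)⟫ = ⟪lam, coroot α⟫ :=
    aux_inner_sRefl_coroot hγ0 lam α
  have hcase : sRefl γ α ∈ R.pos ∪ (-R.pos) := R.pos_union ▸ hβroot
  rcases hcase with hc | hc
  · left
    exact ⟨R.aux_wl_sRefl hγ hlamP, sRefl γ α, hc, hsum, by rw [hinner, hkβ]; exact h1,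
      by rw [hinner, hkβ]; exact h2⟩
  · right
    rw [Set.mem_neg] at hc
    have hkδ : k (-(sRefl γ α)) = k (sRefl γ α) := R.aux_k_neg hk hβroot
    have hinmu : ⟪sRefl γ mu, coroot (sRefl γ α)⟫ = ⟪lam, coroot α⟫ + 2 := by
      rw [aux_inner_sRefl_coroot hγ0 mu α, hmueq, inner_add_left,
        aux_inner_coroot_self hα0]
    refine ⟨R.aux_wl_sRefl hγ hmu, -(sRefl γ α), hc, ?_, ?_, ?_⟩
    · rw [hsum]; abel
    · rw [aux_coroot_neg, inner_neg_right, hinmu, hkδ, hkβ]; linarith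
    · rw [aux_coroot_neg, inner_neg_right, hinmu, hkδ, hkβ]; linarith

lemma aux_symFire_sRefl_iff {k : V → ℕ} (hk : R.IsWInvariant k) {γ : V} (hγ : γ ∈ R.roots)
    {lam mu : V} (hlam : lam ∈ R.weightLattice) (hmu : mu ∈ R.weightLattice) :
    (R.symFire k lam mu ∨ R.symFire k mu lam) ↔
      (R.symFire k (sRefl γ lam) (sRefl γ mu) ∨
        R.symFire k (sRefl γ mu) (sRefl γ lam)) := by
  have hγ0 := R.aux_root_ne hγ
  constructor
  · rintro (h | h)
    · exact R.aux_symFire_sRefl hk hγ hmu h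
    · exact (R.aux_symFire_sRefl hk hγ hlam h).symm
  · rintro (h | h)
    · have := R.aux_symFire_sRefl hk hγ (R.aux_wl_sRefl hγ hmu) h
      rwa [aux_sRefl_sRefl hγ0, aux_sRefl_sRefl hγ0] at this
    · have := R.aux_symFire_sRefl hk hγ (R.aux_wl_sRefl hγ hlam) h
      rw [aux_sRefl_sRefl hγ0, aux_sRefl_sRefl hγ0] at this
      exact this.symm

lemma aux_wl_foldr (l : List V) (hl : ∀ α ∈ l, α ∈ R.roots) {lam : V}
    (hlam : lam ∈ R.weightLattice) :
    ((l.map sRefl).foldr (· ∘ ·) id) lam ∈ R.weightLattice := by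
  induction l with
  | nil => simpa using hlam
  | cons γ t ih =>
    have := R.aux_wl_sRefl (hl γ (by simp))
      (ih (fun a ha => hl a (List.mem_cons_of_mem _ ha)))
    simpa using this

lemma aux_main (k : V → ℕ) (hk : R.IsWInvariant k) (l : List V)
    (hl : ∀ α ∈ l, α ∈ R.roots) (lam mu : V)
    (hlam : lam ∈ R.weightLattice) (hmu : mu ∈ R.weightLattice) :
    (R.symFire k lam mu ∨ R.symFire k mu lam) ↔
      (R.symFire k (((l.map sRefl).foldr (· ∘ ·) id) lam)
          (((l.map sRefl).foldr (· ∘ ·) id) mu) ∨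
        R.symFire k (((l.map sRefl).foldr (· ∘ ·) id) mu)
          (((l.map sRefl).foldr (· ∘ ·) id) lam)) := by
  induction l with
  | nil => simp
  | cons γ t ih =>
    have ht : ∀ α ∈ t, α ∈ R.roots := fun a ha => hl a (List.mem_cons_of_mem _ ha)
    have hγ : γ ∈ R.roots := hl γ (by simp)
    have step := R.aux_symFire_sRefl_iff hk hγ
      (R.aux_wl_foldr t ht hlam) (R.aux_wl_foldr t ht hmu) (k := k)
    simpa using (ih ht).trans step

end RootSystemData

end Aux

/-- Every Weyl group element is an automorphism of the undirected graph of
symmetric interval-firing. -/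
theorem statement2 (R : RootSystemData V) (k : V → ℕ) (hk : R.IsWInvariant k)
    (w : V → V) (hw : w ∈ R.weyl)
    (lam mu : V) (hlam : lam ∈ R.weightLattice) (hmu : mu ∈ R.weightLattice) :
    (R.symFire k lam mu ∨ R.symFire k mu lam) ↔
      (R.symFire k (w lam) (w mu) ∨ R.symFire k (w mu) (w lam)) := by
  obtain ⟨l, hl, rfl⟩ := hw
  exact R.aux_main k hk l hl lam mu hlam hmu
end
end

section
/- For all 𝐤,𝐦∈ℕ[Φ]^W: (i) η_{𝐤+𝐦}(λ)=η_𝐦(η_𝐤(λ)) for every λ∈P; and (ii) the map η_𝐤:P→P is injective. -/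
open RealInnerProductSpace Pointwise

noncomputable section

variable {V : Type*} [NormedAddCommGroup V] [InnerProductSpace ℝ V]

section RSAux

lemma RS_coroot_neg (α : V) : coroot (-α) = -coroot α := by
  simp [coroot, smul_neg]

lemma RS_inner_coroot_self {α : V} (h : α ≠ 0) : ⟪α, coroot α⟫ = 2 := by
  have h0 : ⟪α, α⟫ ≠ (0:ℝ) := inner_self_ne_zero.mpr h
  rw [coroot, real_inner_smul_right]
  field_simp

def RS_OL (g : V → V) : Prop :=
  (∀ u v, g (u + v) = g u + g v) ∧ (∀ (c : ℝ) (u : V), g (c • u) = c • g u) ∧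
  (∀ u v, ⟪g u, g v⟫ = ⟪u, v⟫)

lemma RS_OL_id : RS_OL (id : V → V) := ⟨fun _ _ => rfl, fun _ _ => rfl, fun _ _ => rfl⟩

lemma RS_OL.comp {g h : V → V} (hg : RS_OL g) (hh : RS_OL h) : RS_OL (g ∘ h) :=
  ⟨fun u v => by simp [Function.comp, hh.1, hg.1],
   fun c u => by simp [Function.comp, hh.2.1, hg.2.1],
   fun u v => by simp [Function.comp, hg.2.2, hh.2.2]⟩

lemma RS_OL.map_zero {g : V → V} (hg : RS_OL g) : g 0 = 0 := by
  have := hg.2.1 0 0; simpa using this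

lemma RS_OL.map_neg {g : V → V} (hg : RS_OL g) (v : V) : g (-v) = - g v := by
  have := hg.2.1 (-1) v; simpa using this

lemma RS_OL.map_sub {g : V → V} (hg : RS_OL g) (u v : V) : g (u - v) = g u - g v := by
  rw [sub_eq_add_neg, hg.1, hg.map_neg, sub_eq_add_neg]

lemma RS_OL.map_finsum {g : V → V} (hg : RS_OL g) {ι : Type*} [DecidableEq ι] (s : Finset ι) (f : ι → V) :
    g (∑ i ∈ s, f i) = ∑ i ∈ s, g (f i) := by
  induction s using Finset.induction_on with
  | empty => simpa using hg.map_zero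
  | insert _ _ h ih => rw [Finset.sum_insert h, Finset.sum_insert h, hg.1, ih]

lemma RS_OL.map_sum {g : V → V} (hg : RS_OL g) {n : ℕ} (c : Fin n → ℝ) (f : Fin n → V) :
    g (∑ i, c i • f i) = ∑ i, c i • g (f i) := by
  rw [hg.map_finsum]
  exact Finset.sum_congr rfl fun i _ => hg.2.1 (c i) (f i)

lemma RS_OL.injective {g : V → V} (hg : RS_OL g) : Function.Injective g := by
  intro u v huv
  have h : ⟪g u - g v, g u - g v⟫ = (0:ℝ) := by rw [huv]; simp
  have : g u - g v = 0 := inner_self_eq_zero.mp h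
  have h2 : g (u - v) = 0 := by rw [hg.map_sub]; exact this
  have h3 : ⟪g (u-v), g (u-v)⟫ = (0:ℝ) := by rw [h2]; simp
  rw [hg.2.2] at h3
  have := inner_self_eq_zero.mp h3
  exact sub_eq_zero.mp this

lemma RS_coroot_map {g : V → V} (hg : RS_OL g) (α : V) : coroot (g α) = g (coroot α) := by
  rw [coroot, coroot, hg.2.2, hg.2.1]

lemma RS_sRefl_conj {g : V → V} (hg : RS_OL g) (α v : V) :
    sRefl (g α) (g v) = g (sRefl α v) := by
  rw [sRefl, sRefl, RS_coroot_map hg, hg.2.2, hg.map_sub, hg.2.1]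

lemma RS_OL_sRefl (α : V) : RS_OL (sRefl α) := by
  refine ⟨fun u v => ?_, fun c u => ?_, fun u v => ?_⟩
  · simp [sRefl, inner_add_left, add_smul]; abel
  · simp [sRefl, real_inner_smul_left, mul_smul, smul_sub]
  · by_cases h : α = 0
    · simp [sRefl, coroot, h]
    · have h2 : ⟪α, α⟫ ≠ (0:ℝ) := inner_self_ne_zero.mpr h
      simp only [sRefl, coroot, real_inner_smul_right, inner_sub_left, inner_sub_right,
        real_inner_smul_left, real_inner_smul_right]
      rw [real_inner_comm v u]
      field_simp
      rw [real_inner_comm α v]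
      ring

lemma RS_sRefl_sRefl (α v : V) : sRefl α (sRefl α v) = v := by
  by_cases h : α = 0
  · simp [sRefl, coroot, h]
  · have h2 : ⟪α, coroot α⟫ = 2 := RS_inner_coroot_self h
    simp only [sRefl, inner_sub_left, real_inner_smul_left, h2]
    module

lemma RS_sRefl_self {α : V} (h : α ≠ 0) : sRefl α α = -α := by
  rw [sRefl, RS_inner_coroot_self h]; module

lemma RS_sRefl_neg (α : V) : sRefl (-α) = sRefl α := by
  funext v
  rw [sRefl, sRefl, RS_coroot_neg]
  simp

lemma RS_sRefl_fix {α v : V} (h : ⟪v, coroot α⟫ = 0) : sRefl α v = v := by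
  rw [sRefl, h]; simp

end RSAux

section RSMain

variable {R : RootSystemData V}

lemma RS_root_ne_zero {α : V} (h : α ∈ R.roots) : α ≠ 0 := fun e => R.roots_nonzero (e ▸ h)

lemma RS_simple_root (R : RootSystemData V) (i : Fin R.n) : R.simple i ∈ R.roots :=
  R.pos_subset (R.simple_mem i)

lemma RS_simple_ne_zero (R : RootSystemData V) (i : Fin R.n) : R.simple i ≠ 0 :=
  RS_root_ne_zero (RS_simple_root R i)

lemma RS_root_cases {α : V} (h : α ∈ R.roots) : α ∈ R.pos ∨ -α ∈ R.pos := by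
  rw [R.pos_union] at h
  rcases h with h | h
  · exact Or.inl h
  · exact Or.inr (Set.mem_neg.mp h)

lemma RS_neg_root {α : V} (h : α ∈ R.roots) : -α ∈ R.roots := by
  rw [R.pos_union] at h ⊢
  rcases h with h | h
  · exact Or.inr (Set.neg_mem_neg.mpr h)
  · exact Or.inl (Set.mem_neg.mp h)

lemma RS_coeff_eq_zero {c : Fin R.n → ℝ} (h : ∑ i, c i • R.simple i = 0) : ∀ i, c i = 0 :=
  Fintype.linearIndependent_iff.mp R.simple_li c h

lemma RS_pos_neg_disjoint {α : V} (h : α ∈ R.pos) : -α ∉ R.pos := by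
  intro h2
  obtain ⟨c, hc⟩ := R.pos_combo α h
  obtain ⟨d, hd⟩ := R.pos_combo _ h2
  have key : ∑ i, (((c i : ℝ) + (d i : ℝ)) • R.simple i) = 0 := by
    have : ∑ i, (((c i : ℝ) + (d i : ℝ)) • R.simple i)
        = (∑ i, (c i : ℝ) • R.simple i) + ∑ i, (d i : ℝ) • R.simple i := by
      rw [← Finset.sum_add_distrib]
      exact Finset.sum_congr rfl fun i _ => add_smul _ _ _
    rw [this, ← hc, ← hd]
    simp
  have hz := RS_coeff_eq_zero key
  have hc0 : ∀ i, (c i : ℝ) = 0 := by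
    intro i
    have h1 := hz i
    have h2 : (0:ℝ) ≤ c i := Nat.cast_nonneg _
    have h3 : (0:ℝ) ≤ d i := Nat.cast_nonneg _
    linarith
  have : α = 0 := by
    rw [hc]
    apply Finset.sum_eq_zero
    intro i _
    rw [hc0 i, zero_smul]
  exact RS_root_ne_zero (R.pos_subset h) this

lemma RS_pos_of_combo {α : V} (hα : α ∈ R.roots) {c : Fin R.n → ℝ}
    (hc : α = ∑ i, c i • R.simple i) (h0 : ∀ i, 0 ≤ c i) : α ∈ R.pos := by
  rcases RS_root_cases hα with h | h
  · exact h
  · exfalso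
    obtain ⟨d, hd⟩ := R.pos_combo _ h
    have key : ∑ i, ((c i + (d i : ℝ)) • R.simple i) = 0 := by
      have : ∑ i, ((c i + (d i : ℝ)) • R.simple i)
          = (∑ i, c i • R.simple i) + ∑ i, (d i : ℝ) • R.simple i := by
        rw [← Finset.sum_add_distrib]
        exact Finset.sum_congr rfl fun i _ => add_smul _ _ _
      rw [this, ← hc, ← hd]
      simp
    have hz := RS_coeff_eq_zero key
    have hc0 : ∀ i, c i = 0 := by
      intro i
      have h1 := hz i
      have h3 : (0:ℝ) ≤ d i := Nat.cast_nonneg _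
      have h2 := h0 i
      linarith
    have : α = 0 := by
      rw [hc]
      apply Finset.sum_eq_zero
      intro i _
      rw [hc0 i, zero_smul]
    exact RS_root_ne_zero hα this

lemma RS_sRefl_simple_pos {i : Fin R.n} {α : V} (hα : α ∈ R.pos) (hne : α ≠ R.simple i) :
    sRefl (R.simple i) α ∈ R.pos := by
  have hroot : sRefl (R.simple i) α ∈ R.roots :=
    R.refl_mem _ (RS_simple_root R i) _ (R.pos_subset hα)
  rcases RS_root_cases hroot with h | h
  · exact h
  · exfalso
    obtain ⟨c, hc⟩ := R.pos_combo α hα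
    obtain ⟨d, hd⟩ := R.pos_combo _ h
    set t := ⟪α, coroot (R.simple i)⟫ with ht
    have hrefl : sRefl (R.simple i) α = α - t • R.simple i := rfl
    have key : ∑ j, (((c j : ℝ) + (d j : ℝ) - (if j = i then t else 0)) • R.simple j) = 0 := by
      have expand : ∑ j, (((c j : ℝ) + (d j : ℝ) - (if j = i then t else 0)) • R.simple j)
          = (∑ j, (c j : ℝ) • R.simple j) + (∑ j, (d j : ℝ) • R.simple j)
            - ∑ j, (if j = i then t else 0) • R.simple j := by
        simp only [sub_smul, add_smul, Finset.sum_sub_distrib, Finset.sum_add_distrib]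
      have hdelta : ∑ j, (if j = i then t else 0) • R.simple j = t • R.simple i := by
        rw [Finset.sum_eq_single i]
        · simp
        · intro j _ hji; rw [if_neg hji, zero_smul]
        · intro hni; exact absurd (Finset.mem_univ i) hni
      have hd2 : ∑ j, (d j : ℝ) • R.simple j = t • R.simple i - α := by
        rw [← hd, hrefl, neg_sub]
      rw [expand, hdelta, ← hc, hd2]
      abel
    have hz := RS_coeff_eq_zero key
    have hcj : ∀ j, j ≠ i → (c j : ℝ) = 0 := by
      intro j hji
      have h1 := hz j
      rw [if_neg hji] at h1
      have h2 : (0:ℝ) ≤ c j := Nat.cast_nonneg _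
      have h3 : (0:ℝ) ≤ d j := Nat.cast_nonneg _
      linarith
    have hαi : α = (c i : ℝ) • R.simple i := by
      rw [hc, Finset.sum_eq_single i]
      · intro j _ hji; rw [hcj j hji, zero_smul]
      · intro hni; exact absurd (Finset.mem_univ i) hni
    have hmem : (c i : ℝ) • R.simple i ∈ R.roots := hαi ▸ R.pos_subset hα
    rcases R.reduced (R.simple i) (RS_simple_root R i) (c i) hmem with h1 | h1
    · exact hne (by rw [hαi, h1])
    · have : -α ∈ R.pos := by
        rw [hαi, h1, neg_neg]
        exact R.simple_mem i
      exact RS_pos_neg_disjoint hα this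

lemma RS_inner_self_pos {x : V} (h : x ≠ 0) : (0:ℝ) < ⟪x, x⟫ :=
  lt_of_le_of_ne real_inner_self_nonneg (Ne.symm (inner_self_ne_zero.mpr h))

lemma RS_inner_coroot_scale (ν α : V) (h : α ≠ 0) :
    ⟪ν, coroot α⟫ = (2 / ⟪α, α⟫) * ⟪ν, α⟫ := by
  rw [coroot, real_inner_smul_right]

lemma RS_dominant_inner_nonneg {ν : V} (hν : R.IsDominant ν) {β : V} (hβ : β ∈ R.pos) :
    0 ≤ ⟪ν, β⟫ := by
  obtain ⟨c, hc⟩ := R.pos_combo β hβ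
  rw [hc, inner_sum]
  apply Finset.sum_nonneg
  intro i _
  rw [real_inner_smul_right]
  apply mul_nonneg (Nat.cast_nonneg _)
  have hi := hν i
  have hne := RS_simple_ne_zero R i
  rw [RS_inner_coroot_scale ν _ hne] at hi
  have hA : (0:ℝ) < ⟪R.simple i, R.simple i⟫ := RS_inner_self_pos hne
  nlinarith [hi, div_pos (by norm_num : (0:ℝ) < 2) hA]

lemma RS_dominant_coroot_nonneg {ν : V} (hν : R.IsDominant ν) {β : V} (hβ : β ∈ R.pos) :
    0 ≤ ⟪ν, coroot β⟫ := by
  have hne : β ≠ 0 := RS_root_ne_zero (R.pos_subset hβ)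
  rw [RS_inner_coroot_scale ν β hne]
  have hA : (0:ℝ) < ⟪β, β⟫ := RS_inner_self_pos hne
  exact mul_nonneg (le_of_lt (div_pos (by norm_num) hA)) (RS_dominant_inner_nonneg hν hβ)

lemma RS_coroot_zero_of_inner_zero {ν β : V} (h : ⟪ν, β⟫ = 0) : ⟪ν, coroot β⟫ = 0 := by
  rw [coroot, real_inner_smul_right, h, mul_zero]

end RSMain


section RSWord

variable {R : RootSystemData V}

lemma RS_foldr_comp (f : List (V → V)) (x : V → V) :
    f.foldr (· ∘ ·) x = f.foldr (· ∘ ·) id ∘ x := by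
  induction f with
  | nil => rfl
  | cons a l ih => simp [List.foldr_cons, ih]; rfl

lemma RS_wordProd_nil (R : RootSystemData V) : R.wordProd [] = id := rfl

lemma RS_wordProd_cons (i : Fin R.n) (l : List (Fin R.n)) :
    R.wordProd (i :: l) = sRefl (R.simple i) ∘ R.wordProd l := rfl

lemma RS_wordProd_append (l₁ l₂ : List (Fin R.n)) :
    R.wordProd (l₁ ++ l₂) = R.wordProd l₁ ∘ R.wordProd l₂ := by
  induction l₁ with
  | nil => rfl
  | cons i l ih =>
      rw [List.cons_append, RS_wordProd_cons, RS_wordProd_cons, ih]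
      rfl

lemma RS_wordProd_concat (l : List (Fin R.n)) (i : Fin R.n) :
    R.wordProd (l ++ [i]) = R.wordProd l ∘ sRefl (R.simple i) := by
  rw [RS_wordProd_append]
  congr 1

lemma RS_wordProd_OL (l : List (Fin R.n)) : RS_OL (R.wordProd l) := by
  induction l with
  | nil => exact RS_OL_id
  | cons i l ih => exact (RS_OL_sRefl _).comp ih

lemma RS_wordProd_root (l : List (Fin R.n)) {α : V} (h : α ∈ R.roots) :
    R.wordProd l α ∈ R.roots := by
  induction l with
  | nil => exact h
  | cons i l ih => exact R.refl_mem _ (RS_simple_root R i) _ ih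

lemma RS_wordProd_reverse (l : List (Fin R.n)) (v : V) :
    R.wordProd l (R.wordProd l.reverse v) = v := by
  induction l generalizing v with
  | nil => rfl
  | cons i l ih =>
      rw [List.reverse_cons, RS_wordProd_cons, RS_wordProd_concat]
      simp only [Function.comp_apply]
      rw [ih, RS_sRefl_sRefl]

lemma RS_wordProd_reverse' (l : List (Fin R.n)) (v : V) :
    R.wordProd l.reverse (R.wordProd l v) = v := by
  have := RS_wordProd_reverse (R := R) l.reverse v
  rwa [List.reverse_reverse] at this

lemma RS_weyl_id (R : RootSystemData V) : id ∈ R.weyl :=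
  ⟨[], by simp, rfl⟩

lemma RS_weyl_comp {w₁ w₂ : V → V} (h₁ : w₁ ∈ R.weyl) (h₂ : w₂ ∈ R.weyl) :
    w₁ ∘ w₂ ∈ R.weyl := by
  obtain ⟨l₁, hl₁, e₁⟩ := h₁
  obtain ⟨l₂, hl₂, e₂⟩ := h₂
  refine ⟨l₁ ++ l₂, ?_, ?_⟩
  · intro α hα
    rcases List.mem_append.mp hα with h | h
    · exact hl₁ α h
    · exact hl₂ α h
  · rw [List.map_append, List.foldr_append, e₁, e₂, ← RS_foldr_comp]

lemma RS_sRefl_mem_weyl {α : V} (h : α ∈ R.roots) : sRefl α ∈ R.weyl := by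
  refine ⟨[α], by simpa using h, ?_⟩
  simp only [List.map_cons, List.map_nil, List.foldr_cons, List.foldr_nil]
  rfl

/-- Generation: every positive root is in the simple-reflection orbit of a simple root. -/
lemma RS_pos_gen_aux : ∀ h : ℕ, ∀ α ∈ R.pos, ∀ c : Fin R.n → ℕ,
    α = ∑ i, (c i : ℝ) • R.simple i → (∑ i, c i) = h →
    ∃ (l : List (Fin R.n)) (i : Fin R.n), α = R.wordProd l (R.simple i) := by
  intro h
  induction h using Nat.strong_induction_on with
  | _ h ih =>
    intro α hα c hc hsum
    have hne : α ≠ 0 := RS_root_ne_zero (R.pos_subset hα)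
    have hpos : (0:ℝ) < ⟪α, α⟫ := RS_inner_self_pos hne
    have hexists : ∃ i, c i ≠ 0 ∧ 0 < ⟪α, R.simple i⟫ := by
      by_contra hcon
      push_neg at hcon
      have expand : ⟪α, α⟫ = ∑ i, (c i : ℝ) * ⟪α, R.simple i⟫ := by
        nth_rewrite 2 [hc]
        rw [inner_sum]
        exact Finset.sum_congr rfl fun i _ => real_inner_smul_right _ _ _
      have hle : ⟪α, α⟫ ≤ 0 := by
        rw [expand]
        apply Finset.sum_nonpos
        intro i _
        by_cases hci : c i = 0
        · rw [hci]; simp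
        · exact mul_nonpos_of_nonneg_of_nonpos (Nat.cast_nonneg _) (hcon i hci)
      linarith
    obtain ⟨i, hci, hipos⟩ := hexists
    by_cases heq : α = R.simple i
    · exact ⟨[], i, heq⟩
    · have hβ : sRefl (R.simple i) α ∈ R.pos := RS_sRefl_simple_pos hα heq
      set t := ⟪α, coroot (R.simple i)⟫ with ht
      have htpos : 0 < t := by
        rw [ht, RS_inner_coroot_scale _ _ (RS_simple_ne_zero R i)]
        exact mul_pos (div_pos (by norm_num) (RS_inner_self_pos (RS_simple_ne_zero R i))) hipos
      obtain ⟨mz, hmz⟩ := R.crystallographic (R.simple i) (RS_simple_root R i) α (R.pos_subset hα)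
      have hm1 : (1:ℝ) ≤ t := by
        rw [ht, hmz]
        rw [ht, hmz] at htpos
        exact_mod_cast htpos
      obtain ⟨d, hd⟩ := R.pos_combo _ hβ
      have hrefl : sRefl (R.simple i) α = α - t • R.simple i := rfl
      have hdelta : ∑ j, (if j = i then t else 0) • R.simple j = t • R.simple i := by
        rw [Finset.sum_eq_single i]
        · simp
        · intro j _ hji; rw [if_neg hji, zero_smul]
        · intro hni; exact absurd (Finset.mem_univ i) hni
      have key : ∑ j, (((d j : ℝ) - (c j : ℝ) + (if j = i then t else 0)) • R.simple j) = 0 := by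
        simp only [sub_smul, add_smul, Finset.sum_sub_distrib, Finset.sum_add_distrib]
        rw [← hd, ← hc, hdelta, hrefl]
        abel
      have hz := RS_coeff_eq_zero key
      have hdc : ∀ j, (d j : ℝ) = (c j : ℝ) - (if j = i then t else 0) := by
        intro j
        have := hz j
        linarith
      have hsumr : (∑ j, (d j : ℝ)) = (∑ j, (c j : ℝ)) - t := by
        rw [Finset.sum_congr rfl fun j _ => hdc j, Finset.sum_sub_distrib]
        congr 1
        rw [Finset.sum_eq_single i]
        · simp
        · intro j _ hji; rw [if_neg hji]
        · intro hni; exact absurd (Finset.mem_univ i) hni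
      have hsum_lt : ∑ j, d j < h := by
        have hr : (↑(∑ j, d j) : ℝ) < ↑(∑ j, c j) := by
          push_cast
          rw [hsumr]
          linarith
        rw [← hsum]
        exact_mod_cast hr
      obtain ⟨l, i', hli⟩ := ih (∑ j, d j) hsum_lt _ hβ d hd rfl
      refine ⟨i :: l, i', ?_⟩
      rw [RS_wordProd_cons]
      simp only [Function.comp_apply]
      rw [← hli]
      exact (RS_sRefl_sRefl _ _).symm

lemma RS_pos_gen {α : V} (hα : α ∈ R.pos) :
    ∃ (l : List (Fin R.n)) (i : Fin R.n), α = R.wordProd l (R.simple i) := by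
  obtain ⟨c, hc⟩ := R.pos_combo α hα
  exact RS_pos_gen_aux _ α hα c hc rfl

lemma RS_sRefl_word {α : V} (hα : α ∈ R.roots) : ∃ l, sRefl α = R.wordProd l := by
  have main : ∀ β ∈ R.pos, ∃ l, sRefl β = R.wordProd l := by
    intro β hβ
    obtain ⟨l, i, he⟩ := RS_pos_gen hβ
    refine ⟨l ++ i :: l.reverse, ?_⟩
    funext v
    rw [RS_wordProd_append, RS_wordProd_cons]
    simp only [Function.comp_apply]
    rw [he]
    conv_lhs => rw [← RS_wordProd_reverse l v]
    rw [RS_sRefl_conj (RS_wordProd_OL l)]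
  rcases RS_root_cases hα with h | h
  · exact main α h
  · obtain ⟨l, hl⟩ := main _ h
    exact ⟨l, by rw [← RS_sRefl_neg α]; exact hl⟩

lemma RS_weyl_word {w : V → V} (h : w ∈ R.weyl) :
    ∃ l : List (Fin R.n), w = R.wordProd l := by
  obtain ⟨lr, hlr, e⟩ := h
  subst e
  induction lr with
  | nil => exact ⟨[], rfl⟩
  | cons α lr ih =>
      obtain ⟨l₀, hl₀⟩ := ih (fun β hβ => hlr β (List.mem_cons_of_mem α hβ))
      obtain ⟨l₁, hl₁⟩ := RS_sRefl_word (hlr α List.mem_cons_self)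
      refine ⟨l₁ ++ l₀, ?_⟩
      rw [RS_wordProd_append, ← hl₀, ← hl₁]
      rfl

end RSWord


section RSWL

variable {R : RootSystemData V}

/-- Integrality against simple coroots. -/
def RS_WLs (R : RootSystemData V) (v : V) : Prop :=
  ∀ i, ∃ z : ℤ, ⟪v, coroot (R.simple i)⟫ = (z : ℝ)

lemma RS_WLs_sRefl {v : V} (hv : RS_WLs R v) (j : Fin R.n) :
    RS_WLs R (sRefl (R.simple j) v) := by
  intro i
  obtain ⟨a, ha⟩ := hv i
  obtain ⟨b, hb⟩ := hv j
  obtain ⟨m, hm⟩ :=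
    R.crystallographic (R.simple i) (RS_simple_root R i) (R.simple j) (RS_simple_root R j)
  refine ⟨a - b * m, ?_⟩
  rw [sRefl, inner_sub_left, real_inner_smul_left, ha, hb, hm]
  push_cast
  ring

lemma RS_WLs_word (l : List (Fin R.n)) {v : V} (hv : RS_WLs R v) :
    RS_WLs R (R.wordProd l v) := by
  induction l with
  | nil => exact hv
  | cons j l ih => exact RS_WLs_sRefl ih j

lemma RS_mem_WL {v : V} (hv : RS_WLs R v) : v ∈ R.weightLattice := by
  have main : ∀ β ∈ R.pos, ∃ z : ℤ, ⟪v, coroot β⟫ = (z:ℝ) := by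
    intro β hβ
    obtain ⟨l, i, he⟩ := RS_pos_gen hβ
    have h1 : coroot β = R.wordProd l (coroot (R.simple i)) := by
      rw [he, RS_coroot_map (RS_wordProd_OL l)]
    obtain ⟨z, hz⟩ := RS_WLs_word l.reverse hv i
    refine ⟨z, ?_⟩
    rw [h1]
    calc ⟪v, R.wordProd l (coroot (R.simple i))⟫
        = ⟪R.wordProd l (R.wordProd l.reverse v), R.wordProd l (coroot (R.simple i))⟫ := by
          rw [RS_wordProd_reverse]
      _ = ⟪R.wordProd l.reverse v, coroot (R.simple i)⟫ := (RS_wordProd_OL l).2.2 _ _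
      _ = (z:ℝ) := hz
  intro α hα
  rcases RS_root_cases hα with h | h
  · exact main α h
  · obtain ⟨z, hz⟩ := main _ h
    refine ⟨-z, ?_⟩
    rw [RS_coroot_neg, inner_neg_right] at hz
    push_cast
    linarith

lemma RS_WL_WLs {v : V} (hv : v ∈ R.weightLattice) : RS_WLs R v :=
  fun i => hv (R.simple i) (RS_simple_root R i)

lemma RS_WL_add {u v : V} (hu : u ∈ R.weightLattice) (hv : v ∈ R.weightLattice) :
    u + v ∈ R.weightLattice := by
  intro α hα
  obtain ⟨a, ha⟩ := hu α hα
  obtain ⟨b, hb⟩ := hv α hα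
  exact ⟨a + b, by rw [inner_add_left, ha, hb]; push_cast; ring⟩

lemma RS_WL_word (l : List (Fin R.n)) {v : V} (hv : v ∈ R.weightLattice) :
    R.wordProd l v ∈ R.weightLattice := by
  intro α hα
  have hβ : R.wordProd l.reverse α ∈ R.roots := RS_wordProd_root _ hα
  obtain ⟨z, hz⟩ := hv _ hβ
  refine ⟨z, ?_⟩
  calc ⟪R.wordProd l v, coroot α⟫
      = ⟪R.wordProd l v, coroot (R.wordProd l (R.wordProd l.reverse α))⟫ := by
        rw [RS_wordProd_reverse]
    _ = ⟪R.wordProd l v, R.wordProd l (coroot (R.wordProd l.reverse α))⟫ := by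
        rw [RS_coroot_map (RS_wordProd_OL l)]
    _ = ⟪v, coroot (R.wordProd l.reverse α)⟫ := (RS_wordProd_OL l).2.2 _ _
    _ = (z:ℝ) := hz

end RSWL

section RSInv

variable {R : RootSystemData V}

/-- The inversion set of `w`. -/
def RS_Inv (R : RootSystemData V) (w : V → V) : Set V := {α | α ∈ R.pos ∧ -(w α) ∈ R.pos}

lemma RS_Inv_finite (w : V → V) : (RS_Inv R w).Finite :=
  R.roots_finite.subset fun α hα => R.pos_subset hα.1

/-- The number of inversions of `w`. -/
def RS_N (R : RootSystemData V) (w : V → V) : ℕ := (RS_Inv R w).ncard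

lemma RS_N_id : RS_N R (id : V → V) = 0 := by
  have : RS_Inv R (id : V → V) = ∅ := by
    ext α
    simp only [RS_Inv, Set.mem_setOf_eq, Set.mem_empty_iff_false, iff_false, not_and, id_eq]
    exact fun h => RS_pos_neg_disjoint h
  rw [RS_N, this, Set.ncard_empty]

lemma RS_sRefl_inj (α : V) : Function.Injective (sRefl α) := fun a b hab => by
  rw [← RS_sRefl_sRefl α a, hab, RS_sRefl_sRefl]

lemma RS_Inv_concat {w : V → V} (hw : RS_OL w) (i : Fin R.n)
    (hpos : w (R.simple i) ∈ R.pos) :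
    RS_Inv R (w ∘ sRefl (R.simple i))
      = insert (R.simple i) (sRefl (R.simple i) '' RS_Inv R w) := by
  ext α
  constructor
  · rintro ⟨hα, hneg⟩
    by_cases he : α = R.simple i
    · exact he ▸ Set.mem_insert _ _
    · refine Set.mem_insert_of_mem _ ⟨sRefl (R.simple i) α, ⟨RS_sRefl_simple_pos hα he, ?_⟩,
        RS_sRefl_sRefl _ _⟩
      simpa [Function.comp] using hneg
  · rintro (rfl | ⟨β, ⟨hβpos, hβneg⟩, rfl⟩)
    · refine ⟨R.simple_mem i, ?_⟩
      have h1 : sRefl (R.simple i) (R.simple i) = -(R.simple i) :=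
        RS_sRefl_self (RS_simple_ne_zero R i)
      simp only [Function.comp_apply, h1, hw.map_neg, neg_neg]
      exact hpos
    · have hne : β ≠ R.simple i := by
        intro he
        subst he
        exact RS_pos_neg_disjoint hpos hβneg
      refine ⟨RS_sRefl_simple_pos hβpos hne, ?_⟩
      simp only [Function.comp_apply, RS_sRefl_sRefl]
      exact hβneg

lemma RS_N_concat_pos {w : V → V} (hw : RS_OL w) (i : Fin R.n)
    (hpos : w (R.simple i) ∈ R.pos) :
    RS_N R (w ∘ sRefl (R.simple i)) = RS_N R w + 1 := by
  rw [RS_N, RS_Inv_concat hw i hpos]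
  have hnm : R.simple i ∉ sRefl (R.simple i) '' RS_Inv R w := by
    rintro ⟨β, ⟨hβpos, _⟩, hβe⟩
    have : β = sRefl (R.simple i) (R.simple i) := by
      have h2 := congrArg (sRefl (R.simple i)) hβe
      rwa [RS_sRefl_sRefl] at h2
    rw [RS_sRefl_self (RS_simple_ne_zero R i)] at this
    subst this
    exact RS_pos_neg_disjoint (R.simple_mem i) (by simpa using hβpos)
  rw [Set.ncard_insert_of_notMem hnm ((RS_Inv_finite w).image _),
    Set.ncard_image_of_injective _ (RS_sRefl_inj _)]
  rfl

lemma RS_N_concat_neg {w : V → V} (hw : RS_OL w) (i : Fin R.n)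
    (hneg : -(w (R.simple i)) ∈ R.pos) :
    RS_N R w = RS_N R (w ∘ sRefl (R.simple i)) + 1 := by
  have hw' : RS_OL (w ∘ sRefl (R.simple i)) := hw.comp (RS_OL_sRefl _)
  have hpos : (w ∘ sRefl (R.simple i)) (R.simple i) ∈ R.pos := by
    simp only [Function.comp_apply, RS_sRefl_self (RS_simple_ne_zero R i), hw.map_neg]
    exact hneg
  have := RS_N_concat_pos hw' i hpos
  have he : (w ∘ sRefl (R.simple i)) ∘ sRefl (R.simple i) = w := by
    funext v
    simp only [Function.comp_apply, RS_sRefl_sRefl]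
  rwa [he] at this

end RSInv


section RSLen

variable {R : RootSystemData V}

lemma RS_coxLen_le {w : V → V} (l : List (Fin R.n)) (hl : w = R.wordProd l) :
    R.coxLen w ≤ l.length :=
  Nat.sInf_le ⟨l, rfl, hl⟩

lemma RS_coxLen_word {w : V → V} (h : ∃ l, w = R.wordProd l) :
    ∃ l : List (Fin R.n), l.length = R.coxLen w ∧ w = R.wordProd l := by
  obtain ⟨l, hl⟩ := h
  have hne : {m : ℕ | ∃ l : List (Fin R.n), l.length = m ∧ w = R.wordProd l}.Nonempty :=
    ⟨l.length, l, rfl, hl⟩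
  exact Nat.sInf_mem hne

lemma RS_N_le_len (l : List (Fin R.n)) : RS_N R (R.wordProd l) ≤ l.length := by
  induction l using List.reverseRecOn with
  | nil => rw [RS_wordProd_nil, RS_N_id]; exact Nat.zero_le _
  | append_singleton l i ih =>
      rw [RS_wordProd_concat]
      have hOL := RS_wordProd_OL (R := R) l
      rcases RS_root_cases (RS_wordProd_root l (RS_simple_root R i)) with h | h
      · rw [RS_N_concat_pos hOL i h]
        simp only [List.length_append, List.length_cons, List.length_nil]
        omega
      · have := RS_N_concat_neg hOL i h
        simp only [List.length_append, List.length_cons, List.length_nil]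
        omega

lemma RS_N_le_coxLen {w : V → V} (h : ∃ l, w = R.wordProd l) : RS_N R w ≤ R.coxLen w := by
  obtain ⟨l, hlen, hw⟩ := RS_coxLen_word h
  rw [← hlen, hw]
  exact RS_N_le_len l

lemma RS_coxLen_zero_eq_id {w : V → V} (h : ∃ l, w = R.wordProd l) (h0 : R.coxLen w = 0) :
    w = id := by
  obtain ⟨l, hlen, hw⟩ := RS_coxLen_word h
  rw [h0] at hlen
  rw [hw, List.length_eq_zero_iff.mp hlen, RS_wordProd_nil]

/-- Strong exchange. -/
lemma RS_exchange (l : List (Fin R.n)) : ∀ {α : V}, α ∈ R.pos →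
    -(R.wordProd l α) ∈ R.pos →
    ∃ l' : List (Fin R.n), l'.length + 1 = l.length ∧
      R.wordProd l ∘ sRefl α = R.wordProd l' := by
  induction l using List.reverseRecOn with
  | nil =>
      intro α hα hneg
      rw [RS_wordProd_nil] at hneg
      exact absurd hneg (RS_pos_neg_disjoint hα)
  | append_singleton l i ih =>
      intro α hα hneg
      rw [RS_wordProd_concat] at hneg
      have hsroot : sRefl (R.simple i) α ∈ R.roots :=
        R.refl_mem _ (RS_simple_root R i) _ (R.pos_subset hα)
      rcases RS_root_cases hsroot with hp | hn
      · obtain ⟨l'', hlen, heq⟩ := ih hp (by simpa using hneg)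
        refine ⟨l'' ++ [i], ?_, ?_⟩
        · simp only [List.length_append, List.length_cons, List.length_nil]
          omega
        · rw [RS_wordProd_concat, RS_wordProd_concat]
          funext v
          simp only [Function.comp_apply]
          have hc := RS_sRefl_conj (RS_OL_sRefl (R.simple i)) α v
          rw [← hc]
          exact congrFun heq (sRefl (R.simple i) v)
      · have heq : α = R.simple i := by
          by_contra hne
          exact RS_pos_neg_disjoint (RS_sRefl_simple_pos hα hne) hn
        subst heq
        refine ⟨l, by simp, ?_⟩
        rw [RS_wordProd_concat]
        funext v
        simp only [Function.comp_apply, RS_sRefl_sRefl]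

/-- Length equals number of inversions. -/
lemma RS_coxLen_eq_N {w : V → V} (h : ∃ l, w = R.wordProd l) : R.coxLen w = RS_N R w := by
  have hNle := RS_N_le_coxLen h
  obtain ⟨l, hlen, hw⟩ := RS_coxLen_word h
  rcases Nat.lt_or_ge (RS_N R w) l.length with hlt | hge
  · exfalso
    have hscan : ∃ j, ∃ hj : j < l.length,
        -(R.wordProd (l.take j) (R.simple l[j])) ∈ R.pos := by
      by_contra hnone
      push_neg at hnone
      have hstep : ∀ j, j ≤ l.length → RS_N R (R.wordProd (l.take j)) = j := by
        intro j
        induction j with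
        | zero => intro _; simp only [List.take_zero, RS_wordProd_nil, RS_N_id]
        | succ j ihj =>
            intro hj
            have hjlt : j < l.length := hj
            have htake : l.take (j+1) = l.take j ++ [l[j]] := by
              have := List.take_concat_get hjlt
              simp only [List.concat_eq_append] at this
              exact this.symm
            have hroot : R.wordProd (l.take j) (R.simple l[j]) ∈ R.roots :=
              RS_wordProd_root _ (RS_simple_root R _)
            have hpos : R.wordProd (l.take j) (R.simple l[j]) ∈ R.pos := by
              rcases RS_root_cases hroot with h1 | h1
              · exact h1
              · exact absurd h1 (hnone j hjlt)
            rw [htake, RS_wordProd_concat, RS_N_concat_pos (RS_wordProd_OL _) _ hpos,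
              ihj (le_of_lt hjlt)]
      have := hstep l.length le_rfl
      rw [List.take_length, ← hw] at this
      omega
    obtain ⟨j, hj, hbad⟩ := hscan
    obtain ⟨l₂, hlen₂, heq₂⟩ := RS_exchange (l.take j) (R.simple_mem _) hbad
    have hsplit : l = l.take j ++ l[j] :: l.drop (j+1) := by
      rw [List.getElem_cons_drop hj, List.take_append_drop]
    have hwnew : w = R.wordProd (l₂ ++ l.drop (j+1)) := by
      rw [RS_wordProd_append, ← heq₂, hw]
      conv_lhs => rw [hsplit]
      rw [RS_wordProd_append, RS_wordProd_cons]
      rfl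
    have htklen : (l.take j).length = j := by
      simp only [List.length_take]
      omega
    have hlt2 : (l₂ ++ l.drop (j+1)).length < l.length := by
      simp only [List.length_append, List.length_drop]
      omega
    have := RS_coxLen_le _ hwnew
    omega
  · omega

lemma RS_N_zero_eq_id {w : V → V} (h : ∃ l, w = R.wordProd l) (h0 : RS_N R w = 0) :
    w = id :=
  RS_coxLen_zero_eq_id h (by rw [RS_coxLen_eq_N h, h0])

end RSLen


section RSStab

variable {R : RootSystemData V}

lemma RS_id_of_no_descent (l : List (Fin R.n))
    (h : ∀ i, R.wordProd l (R.simple i) ∈ R.pos) : R.wordProd l = id := by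
  apply RS_N_zero_eq_id ⟨l, rfl⟩
  have hempty : RS_Inv R (R.wordProd l) = ∅ := by
    ext α
    simp only [RS_Inv, Set.mem_setOf_eq, Set.mem_empty_iff_false, iff_false, not_and]
    intro hα hneg
    obtain ⟨c, hc⟩ := R.pos_combo α hα
    choose d hd using fun i => R.pos_combo _ (h i)
    have hOL := RS_wordProd_OL (R := R) l
    have hwα : R.wordProd l α = ∑ j, (∑ i, (c i : ℝ) * (d i j : ℝ)) • R.simple j := by
      calc R.wordProd l α = ∑ i, (c i : ℝ) • R.wordProd l (R.simple i) := by
            rw [hc]; exact hOL.map_sum _ _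
        _ = ∑ i, (c i : ℝ) • ∑ j, (d i j : ℝ) • R.simple j := by
            exact Finset.sum_congr rfl fun i _ => by rw [hd i]
        _ = ∑ i, ∑ j, ((c i : ℝ) * (d i j : ℝ)) • R.simple j := by
            exact Finset.sum_congr rfl fun i _ => by
              rw [Finset.smul_sum]
              exact Finset.sum_congr rfl fun j _ => (smul_smul _ _ _)
        _ = ∑ j, ∑ i, ((c i : ℝ) * (d i j : ℝ)) • R.simple j := Finset.sum_comm
        _ = ∑ j, (∑ i, (c i : ℝ) * (d i j : ℝ)) • R.simple j := by
            exact Finset.sum_congr rfl fun j _ => (Finset.sum_smul).symm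
    have hwroot : R.wordProd l α ∈ R.roots := RS_wordProd_root l (R.pos_subset hα)
    have hwpos : R.wordProd l α ∈ R.pos := by
      refine RS_pos_of_combo hwroot hwα fun j => ?_
      exact Finset.sum_nonneg fun i _ => mul_nonneg (Nat.cast_nonneg _) (Nat.cast_nonneg _)
    exact RS_pos_neg_disjoint hwpos hneg
  rw [RS_N, hempty, Set.ncard_empty]

lemma RS_descent_or_id (l : List (Fin R.n)) :
    (∃ i, -(R.wordProd l (R.simple i)) ∈ R.pos) ∨ R.wordProd l = id := by
  by_cases hd : ∃ i, -(R.wordProd l (R.simple i)) ∈ R.pos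
  · exact Or.inl hd
  · push_neg at hd
    refine Or.inr (RS_id_of_no_descent l fun i => ?_)
    rcases RS_root_cases (RS_wordProd_root l (RS_simple_root R i)) with h1 | h1
    · exact h1
    · exact absurd h1 (hd i)

lemma RS_dominant_inner_eq_zero {l : List (Fin R.n)} {ν ν' : V} {i : Fin R.n}
    (hν : R.IsDominant ν) (hν' : R.IsDominant ν')
    (he : R.wordProd l ν = ν') (hi : -(R.wordProd l (R.simple i)) ∈ R.pos) :
    ⟪ν, coroot (R.simple i)⟫ = 0 := by
  have h1 : 0 ≤ ⟪ν, R.simple i⟫ := RS_dominant_inner_nonneg hν (R.simple_mem i)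
  have h2 : 0 ≤ ⟪ν', -(R.wordProd l (R.simple i))⟫ := RS_dominant_inner_nonneg hν' hi
  have h3 : ⟪ν', R.wordProd l (R.simple i)⟫ = ⟪ν, R.simple i⟫ := by
    rw [← he]
    exact (RS_wordProd_OL l).2.2 _ _
  rw [inner_neg_right] at h2
  have h4 : ⟪ν, R.simple i⟫ = 0 := le_antisymm (by linarith [h3 ▸ h2]) h1
  exact RS_coroot_zero_of_inner_zero h4

lemma RS_dominant_unique_aux : ∀ (N : ℕ) (l : List (Fin R.n)) {ν ν' : V},
    RS_N R (R.wordProd l) = N → R.IsDominant ν → R.IsDominant ν' →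
    R.wordProd l ν = ν' → ν' = ν := by
  intro N
  induction N using Nat.strong_induction_on with
  | _ N ih =>
    intro l ν ν' hN hν hν' he
    rcases RS_descent_or_id l with ⟨i, hi⟩ | hid
    · have hz : ⟪ν, coroot (R.simple i)⟫ = 0 := RS_dominant_inner_eq_zero hν hν' he hi
      have hfix : sRefl (R.simple i) ν = ν := RS_sRefl_fix hz
      have he' : R.wordProd (l ++ [i]) ν = ν' := by
        rw [RS_wordProd_concat]
        simp only [Function.comp_apply, hfix]
        exact he
      have hlt := RS_N_concat_neg (RS_wordProd_OL l) i hi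
      rw [← RS_wordProd_concat] at hlt
      exact ih (RS_N R (R.wordProd (l ++ [i]))) (by omega) (l ++ [i]) rfl hν hν' he'
    · rw [hid] at he
      exact he.symm

lemma RS_dominant_unique {l : List (Fin R.n)} {ν ν' : V}
    (hν : R.IsDominant ν) (hν' : R.IsDominant ν') (he : R.wordProd l ν = ν') : ν' = ν :=
  RS_dominant_unique_aux _ l rfl hν hν' he

lemma RS_stab_aux : ∀ (N : ℕ) (l : List (Fin R.n)) {ν : V},
    RS_N R (R.wordProd l) = N → R.IsDominant ν → R.wordProd l ν = ν →
    ∃ l' : List (Fin R.n), R.wordProd l = R.wordProd l' ∧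
      ∀ i ∈ l', ⟪ν, coroot (R.simple i)⟫ = 0 := by
  intro N
  induction N using Nat.strong_induction_on with
  | _ N ih =>
    intro l ν hN hν he
    rcases RS_descent_or_id l with ⟨i, hi⟩ | hid
    · have hz : ⟪ν, coroot (R.simple i)⟫ = 0 := RS_dominant_inner_eq_zero hν hν he hi
      have hfix : sRefl (R.simple i) ν = ν := RS_sRefl_fix hz
      have he' : R.wordProd (l ++ [i]) ν = ν := by
        rw [RS_wordProd_concat]
        simp only [Function.comp_apply, hfix]
        exact he
      have hlt := RS_N_concat_neg (RS_wordProd_OL l) i hi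
      rw [← RS_wordProd_concat] at hlt
      obtain ⟨l'', hl''e, hl''z⟩ :=
        ih (RS_N R (R.wordProd (l ++ [i]))) (by omega) (l ++ [i]) rfl hν he'
      refine ⟨l'' ++ [i], ?_, ?_⟩
      · have : R.wordProd ((l ++ [i]) ++ [i]) = R.wordProd l := by
          rw [RS_wordProd_concat, RS_wordProd_concat]
          funext v
          simp only [Function.comp_apply, RS_sRefl_sRefl]
        rw [← this, RS_wordProd_concat (l ++ [i]), RS_wordProd_concat l'', hl''e]
      · intro j hj
        rcases List.mem_append.mp hj with h1 | h1
        · exact hl''z j h1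
        · rw [List.mem_singleton.mp h1]
          exact hz
    · exact ⟨[], by rw [hid]; rfl, by simp⟩

lemma RS_stab {l : List (Fin R.n)} {ν : V} (hν : R.IsDominant ν)
    (he : R.wordProd l ν = ν) :
    ∃ l' : List (Fin R.n), R.wordProd l = R.wordProd l' ∧
      ∀ i ∈ l', ⟪ν, coroot (R.simple i)⟫ = 0 :=
  RS_stab_aux _ l rfl hν he

lemma RS_wordProd_fix {l : List (Fin R.n)} {ν : V}
    (h : ∀ i ∈ l, ⟪ν, coroot (R.simple i)⟫ = 0) : R.wordProd l ν = ν := by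
  induction l with
  | nil => rfl
  | cons i l ihl =>
      rw [RS_wordProd_cons]
      simp only [Function.comp_apply]
      rw [ihl fun j hj => h j (List.mem_cons_of_mem i hj),
        RS_sRefl_fix (h i List.mem_cons_self)]

end RSStab


section RSKey

variable {R : RootSystemData V}

lemma RS_key (fw : Fin R.n → V)
    (hfw : ∀ i j, ⟪fw i, coroot (R.simple j)⟫ = if i = j then (1 : ℝ) else 0)
    (dm : V → V)
    (hdm : ∀ lam ∈ R.weightLattice, dm lam ∈ R.orbit lam ∧ R.IsDominant (dm lam))
    (wl : V → V → V)
    (hwl : ∀ lam ∈ R.weightLattice, wl lam ∈ R.weyl ∧ wl lam (dm lam) = lam ∧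
      ∀ w ∈ R.weyl, w (dm lam) = lam → R.coxLen (wl lam) ≤ R.coxLen w)
    (k : V → ℕ) {lam : V} (hlam : lam ∈ R.weightLattice) :
    etaMap R fw wl k lam ∈ R.weightLattice ∧
    dm (etaMap R fw wl k lam) = dm lam + (∑ i, (k (R.simple i) : ℝ) • fw i) ∧
    wl (etaMap R fw wl k lam) = wl lam := by
  set ρ := ∑ i, (k (R.simple i) : ℝ) • fw i with hρdef
  have hρpair : ∀ j, ⟪ρ, coroot (R.simple j)⟫ = (k (R.simple j) : ℝ) := by
    intro j
    rw [hρdef, sum_inner]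
    have hterm : ∀ i, ⟪(k (R.simple i) : ℝ) • fw i, coroot (R.simple j)⟫
        = if i = j then (k (R.simple i) : ℝ) else 0 := by
      intro i
      rw [real_inner_smul_left, hfw i j]
      split <;> simp
    rw [Finset.sum_congr rfl fun i _ => hterm i, Finset.sum_ite_eq' Finset.univ j]
    simp
  have hρdom : R.IsDominant ρ := fun j => by rw [hρpair j]; exact Nat.cast_nonneg _
  have hρWL : ρ ∈ R.weightLattice := RS_mem_WL fun i => ⟨k (R.simple i), hρpair i⟩
  obtain ⟨hdmorb, hdmdom⟩ := hdm lam hlam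
  obtain ⟨hwlw, hwlmap, hwlmin⟩ := hwl lam hlam
  obtain ⟨LL, hLL⟩ := RS_weyl_word hwlw
  set ν := dm lam with hν
  have hνWL : ν ∈ R.weightLattice := by
    obtain ⟨g, hg, hge⟩ := hdmorb
    obtain ⟨Lg, hLg⟩ := RS_weyl_word hg
    rw [hge, hLg]
    exact RS_WL_word Lg hlam
  have hνρdom : R.IsDominant (ν + ρ) := fun j => by
    rw [inner_add_left]
    exact add_nonneg (hdmdom j) (hρdom j)
  have hνρWL : ν + ρ ∈ R.weightLattice := RS_WL_add hνWL hρWL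
  have hOLL : RS_OL (R.wordProd LL) := RS_wordProd_OL LL
  set η := etaMap R fw wl k lam with hηdef
  have hηe : η = lam + wl lam ρ := rfl
  have hηe2 : η = R.wordProd LL (ν + ρ) := by
    rw [hηe, hLL, hOLL.1 ν ρ, ← hLL, hwlmap]
  have hηWL : η ∈ R.weightLattice := by
    rw [hηe2]
    exact RS_WL_word LL hνρWL
  obtain ⟨hdmorb2, hdmdom2⟩ := hdm η hηWL
  obtain ⟨hwμw, hwμmap, hwμmin⟩ := hwl η hηWL
  obtain ⟨LM, hLM⟩ := RS_weyl_word hwμw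
  have hdmη : dm η = ν + ρ := by
    obtain ⟨g, hg, hge⟩ := hdmorb2
    obtain ⟨Lg, hLg⟩ := RS_weyl_word hg
    have hcomp : R.wordProd (Lg ++ LL) (ν + ρ) = dm η := by
      rw [RS_wordProd_append]
      simp only [Function.comp_apply]
      rw [← hηe2, ← hLg, ← hge]
    exact RS_dominant_unique hνρdom hdmdom2 hcomp
  rw [hdmη] at hwμmap
  have huνρ : R.wordProd (LL.reverse ++ LM) (ν + ρ) = ν + ρ := by
    rw [RS_wordProd_append]
    simp only [Function.comp_apply]
    rw [← hLM, hwμmap, hηe2]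
    exact RS_wordProd_reverse' LL _
  obtain ⟨Lu, hLue, hLuz⟩ := RS_stab hνρdom huνρ
  have hLuν : ∀ i ∈ Lu, ⟪ν, coroot (R.simple i)⟫ = 0 := by
    intro i hi
    have h1 := hLuz i hi
    rw [inner_add_left] at h1
    have h2 := hdmdom i
    have h3 := hρdom i
    linarith
  have huν : R.wordProd Lu ν = ν := RS_wordProd_fix hLuν
  have huνrev : R.wordProd Lu.reverse ν = ν :=
    RS_wordProd_fix fun i hi => hLuν i (List.mem_reverse.mp hi)
  have hdecomp : wl η = R.wordProd LL ∘ R.wordProd Lu := by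
    funext v
    simp only [Function.comp_apply]
    rw [← hLue, RS_wordProd_append]
    simp only [Function.comp_apply]
    rw [RS_wordProd_reverse, ← hLM]
  have hwμν : wl η ν = lam := by
    rw [hdecomp]
    simp only [Function.comp_apply]
    rw [huν, ← hLL, hwlmap]
  have hmin1 : R.coxLen (wl lam) ≤ R.coxLen (wl η) := hwlmin (wl η) hwμw hwμν
  have hmin2 : R.coxLen (wl η) ≤ R.coxLen (wl lam) := by
    apply hwμmin (wl lam) hwlw
    rw [hdmη, hLL, ← hηe2]
  have hM1 : ∀ β, β ∈ R.pos → ⟪ν, β⟫ = 0 → R.wordProd LL β ∈ R.pos := by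
    intro β hβ hzero
    rcases RS_root_cases (RS_wordProd_root LL (R.pos_subset hβ)) with h1 | h1
    · exact h1
    · exfalso
      have hfixβ : sRefl β ν = ν := RS_sRefl_fix (RS_coroot_zero_of_inner_zero hzero)
      have hsw : sRefl β ∈ R.weyl := RS_sRefl_mem_weyl (R.pos_subset hβ)
      have hcomp : wl lam ∘ sRefl β ∈ R.weyl := RS_weyl_comp hwlw hsw
      have hmap : (wl lam ∘ sRefl β) ν = lam := by
        simp only [Function.comp_apply]
        rw [hfixβ, hwlmap]
      have hle := hwlmin _ hcomp hmap
      obtain ⟨Lm, hLmlen, hLm⟩ := RS_coxLen_word ⟨LL, hLL⟩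
      have hLmβ : -(R.wordProd Lm β) ∈ R.pos := by
        have heq : R.wordProd Lm β = R.wordProd LL β := by rw [← hLm, hLL]
        rw [heq]
        exact h1
      obtain ⟨L₂, hL₂len, hL₂⟩ := RS_exchange Lm hβ hLmβ
      have hc2 : R.coxLen (wl lam ∘ sRefl β) ≤ L₂.length := by
        apply RS_coxLen_le
        rw [← hL₂, hLm]
      omega
  have hOLu : RS_OL (R.wordProd Lu) := RS_wordProd_OL Lu
  have hInvu_perp : ∀ γ, γ ∈ RS_Inv R (R.wordProd Lu) →
      ⟪ν, γ⟫ = 0 ∧ ⟪ν, R.wordProd Lu γ⟫ = 0 := by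
    rintro γ ⟨hγ, hγneg⟩
    have hpair : ⟪ν, R.wordProd Lu γ⟫ = ⟪ν, γ⟫ := by
      calc ⟪ν, R.wordProd Lu γ⟫
          = ⟪R.wordProd Lu (R.wordProd Lu.reverse ν), R.wordProd Lu γ⟫ := by
            rw [RS_wordProd_reverse]
        _ = ⟪R.wordProd Lu.reverse ν, γ⟫ := hOLu.2.2 _ _
        _ = ⟪ν, γ⟫ := by rw [huνrev]
    have hg1 : 0 ≤ ⟪ν, γ⟫ := RS_dominant_inner_nonneg hdmdom hγ
    have hg2 : 0 ≤ ⟪ν, -(R.wordProd Lu γ)⟫ := RS_dominant_inner_nonneg hdmdom hγneg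
    rw [inner_neg_right] at hg2
    constructor <;> linarith
  have hAsub : RS_Inv R (R.wordProd Lu) ⊆ RS_Inv R (wl η) := by
    rintro γ ⟨hγ, hγneg⟩
    refine ⟨hγ, ?_⟩
    obtain ⟨hz1, hz2⟩ := hInvu_perp γ ⟨hγ, hγneg⟩
    have hzz : ⟪ν, -(R.wordProd Lu γ)⟫ = 0 := by rw [inner_neg_right, hz2, neg_zero]
    have hpos := hM1 _ hγneg hzz
    rw [hOLL.map_neg] at hpos
    rw [hdecomp]
    simp only [Function.comp_apply]
    exact hpos
  have hBsub : (R.wordProd Lu.reverse) '' (RS_Inv R (R.wordProd LL)) ⊆ RS_Inv R (wl η) := by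
    rintro x ⟨β, ⟨hβ, hβneg⟩, rfl⟩
    have hux : R.wordProd Lu (R.wordProd Lu.reverse β) = β := RS_wordProd_reverse Lu β
    have hxroot : R.wordProd Lu.reverse β ∈ R.roots := RS_wordProd_root _ (R.pos_subset hβ)
    have hxpos : R.wordProd Lu.reverse β ∈ R.pos := by
      rcases RS_root_cases hxroot with h1 | h1
      · exact h1
      · exfalso
        have hγInv : -(R.wordProd Lu.reverse β) ∈ RS_Inv R (R.wordProd Lu) := by
          refine ⟨h1, ?_⟩
          rw [hOLu.map_neg, hux, neg_neg]
          exact hβ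
        obtain ⟨hz1, hz2⟩ := hInvu_perp _ hγInv
        have huγ : R.wordProd Lu (-(R.wordProd Lu.reverse β)) = -β := by
          rw [hOLu.map_neg, hux]
        rw [huγ, inner_neg_right] at hz2
        have hβz : ⟪ν, β⟫ = 0 := by linarith
        exact RS_pos_neg_disjoint (hM1 β hβ hβz) hβneg
    refine ⟨hxpos, ?_⟩
    rw [hdecomp]
    simp only [Function.comp_apply]
    rw [hux]
    exact hβneg
  have hdisj : Disjoint (RS_Inv R (R.wordProd Lu))
      ((R.wordProd Lu.reverse) '' (RS_Inv R (R.wordProd LL))) := by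
    rw [Set.disjoint_left]
    rintro x ⟨hx, hxneg⟩ ⟨β, ⟨hβ, hβneg⟩, rfl⟩
    have hux : R.wordProd Lu (R.wordProd Lu.reverse β) = β := RS_wordProd_reverse Lu β
    rw [hux] at hxneg
    exact RS_pos_neg_disjoint hβ hxneg
  have hcard : RS_N R (R.wordProd Lu) + RS_N R (R.wordProd LL) ≤ RS_N R (wl η) := by
    have hsub : RS_Inv R (R.wordProd Lu) ∪ (R.wordProd Lu.reverse) '' (RS_Inv R (R.wordProd LL))
        ⊆ RS_Inv R (wl η) := Set.union_subset hAsub hBsub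
    have h1 := Set.ncard_union_eq hdisj (RS_Inv_finite _) ((RS_Inv_finite _).image _)
    have h2 : ((R.wordProd Lu.reverse) '' (RS_Inv R (R.wordProd LL))).ncard
        = RS_N R (R.wordProd LL) :=
      Set.ncard_image_of_injective _ (RS_wordProd_OL Lu.reverse).injective
    have h3 := Set.ncard_le_ncard hsub (RS_Inv_finite (R := R) (wl η))
    rw [h1, h2] at h3
    exact h3
  have hl1 : R.coxLen (wl η) = RS_N R (wl η) := RS_coxLen_eq_N ⟨LM, hLM⟩
  have hl2 : R.coxLen (wl lam) = RS_N R (R.wordProd LL) := by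
    rw [hLL]
    exact RS_coxLen_eq_N ⟨LL, rfl⟩
  have hNu : RS_N R (R.wordProd Lu) = 0 := by omega
  have huid : R.wordProd Lu = id := RS_N_zero_eq_id ⟨Lu, rfl⟩ hNu
  have hfinal : wl η = wl lam := by
    rw [hdecomp, huid, ← hLL]
    rfl
  exact ⟨hηWL, hdmη, hfinal⟩

end RSKey

/-- `η_{𝐤+𝐦} = η_𝐦 ∘ η_𝐤`, and each `η_𝐤` is injective on the weight lattice. -/
theorem statement4 (R : RootSystemData V)
    (fw : Fin R.n → V)
    (hfw : ∀ i j, ⟪fw i, coroot (R.simple j)⟫ = if i = j then (1 : ℝ) else 0)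
    (dm : V → V)
    (hdm : ∀ lam ∈ R.weightLattice, dm lam ∈ R.orbit lam ∧ R.IsDominant (dm lam))
    (wl : V → V → V)
    (hwl : ∀ lam ∈ R.weightLattice, wl lam ∈ R.weyl ∧ wl lam (dm lam) = lam ∧
      ∀ w ∈ R.weyl, w (dm lam) = lam → R.coxLen (wl lam) ≤ R.coxLen w)
    (k m : V → ℕ) (hk : R.IsWInvariant k) (hm : R.IsWInvariant m) :
    (∀ lam ∈ R.weightLattice,
      etaMap R fw wl (fun α => k α + m α) lam = etaMap R fw wl m (etaMap R fw wl k lam)) ∧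
    (∀ lam ∈ R.weightLattice, ∀ mu ∈ R.weightLattice,
      etaMap R fw wl k lam = etaMap R fw wl k mu → lam = mu) := by
  constructor
  · intro lam hlam
    obtain ⟨hWL, hdmη, hwlη⟩ := RS_key fw hfw dm hdm wl hwl k hlam
    obtain ⟨LL, hLL⟩ := RS_weyl_word (hwl lam hlam).1
    have hOL : RS_OL (R.wordProd LL) := RS_wordProd_OL LL
    have hsum : (∑ i, ((k (R.simple i) + m (R.simple i) : ℕ) : ℝ) • fw i)
        = (∑ i, (k (R.simple i) : ℝ) • fw i) + ∑ i, (m (R.simple i) : ℝ) • fw i := by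
      rw [← Finset.sum_add_distrib]
      refine Finset.sum_congr rfl fun i _ => ?_
      push_cast
      rw [add_smul]
    simp only [etaMap] at hwlη ⊢
    rw [hsum, hwlη, hLL, hOL.1]
    abel
  · intro lam hlam mu hmu he
    obtain ⟨_, hdmL, hwlL⟩ := RS_key fw hfw dm hdm wl hwl k hlam
    obtain ⟨_, hdmM, hwlM⟩ := RS_key fw hfw dm hdm wl hwl k hmu
    have hdm_eq : dm lam = dm mu := by
      have h1 : dm lam + (∑ i, (k (R.simple i) : ℝ) • fw i)
          = dm mu + (∑ i, (k (R.simple i) : ℝ) • fw i) := by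
        rw [← hdmL, ← hdmM, he]
      exact add_right_cancel h1
    have hwl_eq : wl lam = wl mu := by
      rw [← hwlL, ← hwlM, he]
    calc lam = wl lam (dm lam) := ((hwl lam hlam).2.1).symm
      _ = wl mu (dm mu) := by rw [hwl_eq, hdm_eq]
      _ = mu := (hwl mu hmu).2.1
end
end
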